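/- Let K be a complete non-Archimedean valued field of characteristic p > 0, λ ∈ K with |λ| = 1 not a root of unity, m = min{n ≥ 1 : |1-λ^n| < 1} existing, and k' the least positive integer with p | k' and m | k'-1. Let f(x) = λx + Σ_{p|i} a_i x^i with a = sup_{i≥2} |a_i|^{1/(i-1)} finite. Then the coefficients of the formal conjugacy g satisfy |b_k| ≤ a^{k-1} / |1 - λ^m|^{⌊(k-k')/(mp) + 1⌋} for all k ≥ 2 (where the floor is taken as 0 if k < k'). -/

import Mathlib

open PowerSeries

private lemma poly_pow_char_coeff {K : Type*} [Field K] (p : ℕ) (hp : p.Prime) [CharP K p]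
    (f : Polynomial K) (k : ℕ) (hk : ¬ p ∣ k) : (f ^ p).coeff k = 0 := by
  haveI := Fact.mk hp
  haveI : ExpChar K p := ExpChar.prime hp
  rw [← Polynomial.map_frobenius_expand p f, Polynomial.coeff_map, Polynomial.coeff_expand hp.pos,
    if_neg hk, map_zero]

private lemma ps_pow_char_coeff {K : Type*} [Field K] (p : ℕ) (hp : p.Prime) [CharP K p]
    (S : PowerSeries K) (k : ℕ) (hk : ¬ p ∣ k) : coeff (R := K) k (S ^ p) = 0 := by
  have h1 := PowerSeries.trunc_trunc_pow S (k+1) p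
  have h2 := congrArg (fun q : Polynomial K => q.coeff k) h1
  simp only [PowerSeries.coeff_trunc, if_pos (Nat.lt_succ_self k)] at h2
  rw [← h2, ← Polynomial.coe_pow, Polynomial.coeff_coe, poly_pow_char_coeff p hp _ k hk]

private lemma pow_coeff_dvd {K : Type*} [Field K] (p : ℕ) (hp : p.Prime) [CharP K p]
    (F : PowerSeries K) (j k : ℕ) (hj : p ∣ j) (h : coeff (R := K) k (F ^ j) ≠ 0) : p ∣ k := by
  obtain ⟨t, rfl⟩ := hj
  by_contra hk
  exact h (by rw [mul_comm, pow_mul]; exact ps_pow_char_coeff p hp _ k hk)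

private lemma pow_coeff_low {K : Type*} [Field K] (F : PowerSeries K) (h0 : coeff (R := K) 0 F = 0)
    (j u : ℕ) (hu : u < j) : coeff (R := K) u (F ^ j) = 0 := by
  have hX : (X : PowerSeries K) ∣ F := by
    rw [PowerSeries.X_dvd_iff]; simpa using h0
  have : (X : PowerSeries K) ^ j ∣ F ^ j := pow_dvd_pow_of_dvd hX j
  exact (PowerSeries.X_pow_dvd_iff.mp this) u hu

private lemma pow_coeff_diag {K : Type*} [Field K] (F : PowerSeries K) (h0 : coeff (R := K) 0 F = 0)
    (j : ℕ) : coeff (R := K) j (F ^ j) = (coeff (R := K) 1 F) ^ j := by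
  induction j with
  | zero => simp
  | succ j ih =>
    rw [pow_succ, PowerSeries.coeff_mul]
    rw [Finset.sum_eq_single (j, 1)]
    · rw [ih, pow_succ]
    · rintro ⟨u, v⟩ hmem hne
      rw [Finset.HasAntidiagonal.mem_antidiagonal] at hmem
      rcases Nat.lt_or_ge u j with h | h
      · rw [pow_coeff_low F h0 j u h, zero_mul]
      · have hne' : ¬(u = j ∧ v = 1) := by simpa [Prod.ext_iff] using hne
        have hv : v = 0 := by omega
        subst hv; rw [h0, mul_zero]
    · intro h
      simp at h

private lemma norm_natCast_eq_one {K : Type*} [NontriviallyNormedField K] [IsUltrametricDist K]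
    (p : ℕ) (hp : p.Prime) [CharP K p] (q : ℕ) (hq : ¬ p ∣ q) : ‖(q : K)‖ = 1 := by
  haveI := Fact.mk hp
  have hu : (q : ZMod p) ≠ 0 := by
    simpa [ZMod.natCast_eq_zero_iff] using hq
  set s := ((q : ZMod p)⁻¹).val with hs
  have hmod : ((q * s : ℕ) : ZMod p) = 1 := by
    push_cast
    rw [hs, ZMod.natCast_rightInverse _]
    exact mul_inv_cancel₀ hu
  have hKeq : (q : K) * (s : K) = 1 := by
    have h1 : (q * s) % p = 1 := by
      have h := (ZMod.natCast_eq_natCast_iff (q * s) 1 p).mp (by simpa using hmod)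
      have := hp.two_le
      simpa [Nat.ModEq, Nat.mod_eq_of_lt (show 1 < p by omega)] using h
    have h2 : p * ((q * s) / p) + 1 = q * s := by
      have := Nat.div_add_mod (q * s) p
      omega
    calc (q : K) * (s : K) = ((q * s : ℕ) : K) := by push_cast; ring
    _ = ((p * ((q * s) / p) + 1 : ℕ) : K) := by rw [h2]
    _ = 1 := by push_cast [CharP.cast_eq_zero K p]; ring
  have hq1 : ‖(q : K)‖ ≤ 1 := IsUltrametricDist.norm_natCast_le_one K q
  have hs1 : ‖(s : K)‖ ≤ 1 := IsUltrametricDist.norm_natCast_le_one K s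
  have hmul : ‖(q : K)‖ * ‖(s : K)‖ = 1 := by rw [← norm_mul, hKeq, norm_one]
  refine le_antisymm hq1 ?_
  nlinarith [norm_nonneg ((q : K)), norm_nonneg ((s : K))]

private def eAux (k' m p n : ℕ) : ℕ := if n < k' then 0 else (n - k') / (m * p) + 1

private lemma eAux_mono (k' m p : ℕ) : Monotone (eAux k' m p) := by
  intro x y hxy
  unfold eAux
  split_ifs with h1 h2
  · exact le_rfl
  · exact Nat.zero_le _
  · omega
  · exact Nat.add_le_add_right (Nat.div_le_div_right (by omega)) 1

/-- The Schröder functional equation `g ∘ f = λ·g`, stated coefficient-wise for the formal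
power series `f = F` and `g = ∑ b k · xᵏ`.  Since `F` has zero constant term, the coefficient
of `xⁿ` in `g ∘ F` only involves `Fᵏ` for `k ≤ n`. -/
def SchroderEq {K : Type*} [Field K] (lam : K) (F : PowerSeries K) (b : ℕ → K) : Prop :=
  ∀ n : ℕ,
    (PowerSeries.coeff (R := K) n) (∑ k ∈ Finset.range (n + 1), PowerSeries.C (R := K) (b k) * F ^ k) =
      lam * b n

/-- Coefficient bound for the conjugacy of `f(x) = λx + ∑_{p ∣ i} aᵢ xⁱ`:
`‖b_k‖ ≤ a^{k-1} / ‖1-λ^m‖^{⌊(k-k')/(mp)+1⌋}` for all `k ≥ 2`, where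
`a = sup_{i ≥ 2} ‖aᵢ‖^{1/(i-1)}`, `m` is the least positive integer with `‖1-λ^m‖ < 1`,
and `k'` is the least positive integer with `p ∣ k'` and `m ∣ k'-1`; the floor exponent is
taken to be `0` when `k < k'`. -/
theorem schroder_coeff_bound {K : Type*} [NontriviallyNormedField K]
    [IsUltrametricDist K] [CompleteSpace K] (p : ℕ) (hp : p.Prime) [CharP K p]
    (lam : K) (hlam : ‖lam‖ = 1) (hroot : ∀ n : ℕ, 1 ≤ n → lam ^ n ≠ 1)
    (m : ℕ) (hm1 : 1 ≤ m) (hm2 : ‖1 - lam ^ m‖ < 1)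
    (hmmin : ∀ n : ℕ, 1 ≤ n → ‖1 - lam ^ n‖ < 1 → m ≤ n)
    (k' : ℕ) (hk'pos : 0 < k') (hk'p : p ∣ k') (hk'm : m ∣ k' - 1)
    (hk'min : ∀ l : ℕ, 0 < l → p ∣ l → m ∣ l - 1 → k' ≤ l)
    (F : PowerSeries K) (hF0 : PowerSeries.coeff (R := K) 0 F = 0)
    (hF1 : PowerSeries.coeff (R := K) 1 F = lam)
    (hFdvd : ∀ i : ℕ, 2 ≤ i → PowerSeries.coeff (R := K) i F ≠ 0 → p ∣ i)
    (a : ℝ)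
    (ha : IsLUB (Set.range fun i : {i : ℕ // 2 ≤ i} =>
      ‖PowerSeries.coeff (R := K) (i : ℕ) F‖ ^ ((1 : ℝ) / ((i : ℕ) - 1 : ℝ))) a)
    (b : ℕ → K) (hb0 : b 0 = 0) (hb1 : b 1 = 1)
    (hS : SchroderEq lam F b) :
    ∀ k : ℕ, 2 ≤ k →
      ‖b k‖ ≤ a ^ (k - 1) /
        ‖1 - lam ^ m‖ ^ (if k < k' then 0 else (k - k') / (m * p) + 1) := by
  have hlam0 : lam ≠ 0 := by
    intro h; rw [h] at hlam; simp at hlam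
  have ha0 : 0 ≤ a :=
    le_trans (Real.rpow_nonneg (norm_nonneg _) _)
      (ha.1 (Set.mem_range_self (⟨2, le_rfl⟩ : {i : ℕ // 2 ≤ i})))
  set D : ℝ := ‖1 - lam ^ m‖ with hD
  have hD0 : 0 < D := by
    rw [hD, norm_pos_iff]
    exact sub_ne_zero.mpr (Ne.symm (hroot m hm1))
  have hD1 : D ≤ 1 := le_of_lt hm2
  have hk'2 : 2 ≤ k' := le_trans hp.two_le (Nat.le_of_dvd hk'pos hk'p)
  -- norms of coefficients of F
  have hcoeff : ∀ v : ℕ, 1 ≤ v → ‖PowerSeries.coeff (R := K) v F‖ ≤ a ^ (v - 1) := by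
    intro v hv
    rcases eq_or_lt_of_le hv with h1 | h2
    · rw [← h1]; simpa [hF1, hlam] using le_refl (1 : ℝ)
    · have hub := ha.1 (Set.mem_range_self (⟨v, h2⟩ : {i : ℕ // 2 ≤ i}))
      simp only at hub
      have hv1 : (0 : ℝ) < (v : ℝ) - 1 := by
        have : (2 : ℝ) ≤ (v : ℝ) := by exact_mod_cast h2
        linarith
      have hle := Real.rpow_le_rpow (Real.rpow_nonneg (norm_nonneg _) _) hub (le_of_lt hv1)
      rw [← Real.rpow_mul (norm_nonneg _), one_div_mul_cancel (ne_of_gt hv1),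
        Real.rpow_one] at hle
      calc ‖PowerSeries.coeff (R := K) v F‖ ≤ a ^ ((v : ℝ) - 1) := hle
      _ = a ^ (v - 1) := by
            rw [show ((v : ℝ) - 1) = ((v - 1 : ℕ) : ℝ) by push_cast [Nat.cast_sub hv]; ring,
              Real.rpow_natCast]
  -- norms of coefficients of powers of F
  have hcpow : ∀ j k : ℕ, ‖PowerSeries.coeff (R := K) k (F ^ j)‖ ≤ a ^ (k - j) := by
    intro j
    induction j with
    | zero =>
      intro k
      rcases Nat.eq_zero_or_pos k with rfl | hk
      · simp
      · rw [pow_zero]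
        rw [PowerSeries.coeff_one, if_neg (by omega)]
        simpa using pow_nonneg ha0 _
    | succ j ihj =>
      intro k
      rw [pow_succ, PowerSeries.coeff_mul]
      apply IsUltrametricDist.norm_sum_le_of_forall_le_of_nonneg (pow_nonneg ha0 _)
      rintro ⟨u, v⟩ hmem
      rw [Finset.HasAntidiagonal.mem_antidiagonal] at hmem
      rcases Nat.lt_or_ge u j with hu | hu
      · rw [pow_coeff_low F hF0 j u hu, zero_mul, norm_zero]
        exact pow_nonneg ha0 _
      · rcases Nat.eq_zero_or_pos v with rfl | hv
        · rw [hF0, mul_zero, norm_zero]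
          exact pow_nonneg ha0 _
        · calc ‖PowerSeries.coeff (R := K) u (F ^ j) * PowerSeries.coeff (R := K) v F‖
              = ‖PowerSeries.coeff (R := K) u (F ^ j)‖ * ‖PowerSeries.coeff (R := K) v F‖ := norm_mul _ _
          _ ≤ a ^ (u - j) * a ^ (v - 1) :=
              mul_le_mul (ihj u) (hcoeff v hv) (norm_nonneg _) (pow_nonneg ha0 _)
          _ = a ^ (k - (j + 1)) := by rw [← pow_add]; congr 1; omega
  -- geometric sum norms
  have hgeo : ∀ q : ℕ, 1 - lam ^ (m * q)
      = (∑ i ∈ Finset.range q, (lam ^ m) ^ i) * (1 - lam ^ m) := by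
    intro q
    have h := geom_sum_mul (lam ^ m) q
    rw [pow_mul]
    linear_combination h
  have hgeomle : ∀ q : ℕ, ‖∑ i ∈ Finset.range q, (lam ^ m) ^ i‖ ≤ 1 := by
    intro q
    apply IsUltrametricDist.norm_sum_le_of_forall_le_of_nonneg zero_le_one
    intro i _
    rw [← pow_mul, norm_pow, hlam, one_pow]
  have hvle : ∀ q : ℕ, ‖1 - lam ^ (m * q)‖ ≤ D := by
    intro q
    rw [hgeo q, norm_mul]
    calc ‖∑ i ∈ Finset.range q, (lam ^ m) ^ i‖ * ‖1 - lam ^ m‖ ≤ 1 * ‖1 - lam ^ m‖ :=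
          mul_le_mul_of_nonneg_right (hgeomle q) (norm_nonneg _)
    _ = D := by rw [one_mul]
  have hvlt1 : ∀ n : ℕ, 1 ≤ n → ‖1 - lam ^ n‖ < 1 → m ∣ n := by
    intro n hn hlt
    by_contra hnd
    have hr1 : 1 ≤ n % m := Nat.pos_of_ne_zero fun h => hnd (Nat.dvd_of_mod_eq_zero h)
    have hrm : n % m < m := Nat.mod_lt _ (by omega)
    set r := n % m with hr
    have hrn : r ≤ n := Nat.mod_le n m
    have hdvd : m ∣ n - r := Nat.dvd_sub_mod n
    obtain ⟨q, hq⟩ := hdvd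
    have h1 : ‖(1 : K) - lam ^ r‖ < 1 := by
      have hid : (1 : K) - lam ^ r = (1 - lam ^ n) + lam ^ r * (lam ^ (n - r) - 1) := by
        rw [mul_sub, mul_one, ← pow_add, show r + (n - r) = n by omega]; ring
      rw [hid]
      apply lt_of_le_of_lt (IsUltrametricDist.norm_add_le_max _ _)
      apply max_lt hlt
      rw [norm_mul, norm_pow, hlam, one_pow, one_mul, norm_sub_rev]
      calc ‖1 - lam ^ (n - r)‖ ≤ D := by rw [hq]; exact hvle q
      _ < 1 := hm2
    exact absurd (hmmin r hr1 h1) (by omega)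
  have hveq : ∀ n : ℕ, 1 ≤ n → m ∣ n → ¬ p ∣ n → ‖1 - lam ^ n‖ = D := by
    intro n hn hmn hpn
    obtain ⟨q, rfl⟩ := hmn
    have hq : ¬ p ∣ q := fun h => hpn (Dvd.dvd.mul_left h m)
    rw [hgeo q, norm_mul]
    suffices hS1 : ‖∑ i ∈ Finset.range q, (lam ^ m) ^ i‖ = 1 by rw [hS1, one_mul]
    have hsplit : ∑ i ∈ Finset.range q, (lam ^ m) ^ i
        = (q : K) + ∑ i ∈ Finset.range q, ((lam ^ m) ^ i - 1) := by
      rw [Finset.sum_sub_distrib, Finset.sum_const, Finset.card_range, nsmul_eq_mul, mul_one]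
      ring
    have hsmall : ‖∑ i ∈ Finset.range q, ((lam ^ m) ^ i - 1)‖ < 1 := by
      apply lt_of_le_of_lt _ hm2
      apply IsUltrametricDist.norm_sum_le_of_forall_le_of_nonneg (le_of_lt hD0)
      intro i _
      rw [norm_sub_rev, ← pow_mul]
      exact hvle i
    have hq1 : ‖(q : K)‖ = 1 := norm_natCast_eq_one p hp q hq
    rw [hsplit, IsUltrametricDist.norm_add_eq_max_of_norm_ne_norm
      (by rw [hq1]; exact (ne_of_gt hsmall)), hq1]
    exact max_eq_left (le_of_lt hsmall)
  -- the recursion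
  have hrec : ∀ k : ℕ, 1 ≤ k → (lam - lam ^ k) * b k
      = ∑ j ∈ Finset.range k, b j * PowerSeries.coeff (R := K) k (F ^ j) := by
    intro k hk
    have h := hS k
    rw [map_sum] at h
    simp only [PowerSeries.coeff_C_mul] at h
    rw [Finset.sum_range_succ, pow_coeff_diag F hF0 k, hF1] at h
    linear_combination -h
  have hfac : ∀ k : ℕ, 2 ≤ k → lam - lam ^ k = lam * (1 - lam ^ (k - 1)) := by
    intro k hk
    rw [mul_sub, mul_one, ← pow_succ', show k - 1 + 1 = k by omega]
  have hne : ∀ k : ℕ, 2 ≤ k → lam - lam ^ k ≠ 0 := by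
    intro k hk
    rw [hfac k hk]
    exact mul_ne_zero hlam0 (sub_ne_zero.mpr (Ne.symm (hroot (k - 1) (by omega))))
  -- main induction
  suffices H : ∀ k : ℕ, (¬ p ∣ k → 2 ≤ k → b k = 0) ∧
      (2 ≤ k → ‖b k‖ ≤ a ^ (k - 1) / D ^ eAux k' m p k) by
    intro k hk
    exact (H k).2 hk
  intro k
  induction k using Nat.strong_induction_on with
  | _ k IH =>
  rcases Nat.lt_or_ge k 2 with hk2 | hk2
  · exact ⟨fun _ h => absurd h (by omega), fun h => absurd h (by omega)⟩
  have hrk := hrec k (by omega)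
  have hRHS0 : (0:ℝ) ≤ a ^ (k - 1) / D ^ eAux k' m p k :=
    div_nonneg (pow_nonneg ha0 _) (pow_nonneg (le_of_lt hD0) _)
  by_cases hpk : p ∣ k
  · -- p divides k : genuine estimate
    refine ⟨fun h _ => absurd hpk h, fun _ => ?_⟩
    -- bound each term of the sum
    have hterm : ∀ j : ℕ, j < k →
        ‖b j * PowerSeries.coeff (R := K) k (F ^ j)‖ ≤ a ^ (k - 1) / D ^ eAux k' m p j := by
      intro j hj
      match j, hj with
      | 0, _ => 
        rw [hb0, zero_mul, norm_zero]
        exact div_nonneg (pow_nonneg ha0 _) (pow_nonneg (le_of_lt hD0) _)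
      | 1, _ =>
        rw [hb1, one_mul, eAux, if_pos (by omega), pow_zero, div_one, pow_one]
        exact hcoeff k (by omega)
      | (j+2), hj =>
        have hIH := (IH (j+2) hj).2 (by omega)
        calc ‖b (j+2) * PowerSeries.coeff (R := K) k (F ^ (j+2))‖
            = ‖b (j+2)‖ * ‖PowerSeries.coeff (R := K) k (F ^ (j+2))‖ := norm_mul _ _
        _ ≤ (a ^ (j + 2 - 1) / D ^ eAux k' m p (j+2)) * a ^ (k - (j+2)) :=
            mul_le_mul hIH (hcpow (j+2) k) (norm_nonneg _)
              (div_nonneg (pow_nonneg ha0 _) (pow_nonneg (le_of_lt hD0) _))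
        _ = a ^ (k - 1) / D ^ eAux k' m p (j+2) := by
            rw [div_mul_eq_mul_div, ← pow_add]
            congr 2
            omega
    have hnorm : ‖lam - lam ^ k‖ * ‖b k‖
        = ‖∑ j ∈ Finset.range k, b j * PowerSeries.coeff (R := K) k (F ^ j)‖ := by
      rw [← norm_mul, hrk]
    by_cases hmk : m ∣ (k - 1)
    · -- small divisor
      have hkk' : k' ≤ k := hk'min k (by omega) hpk hmk
      have hpm : ¬ p ∣ m := by
        intro h
        have h1 : p ∣ k' - 1 := dvd_trans h hk'm
        have h2 : p ∣ k' - (k' - 1) := Nat.dvd_sub hk'p h1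
        rw [show k' - (k' - 1) = 1 by omega] at h2
        exact absurd (Nat.le_of_dvd one_pos h2) (by have := hp.two_le; omega)
      have hco : Nat.Coprime m p := Nat.coprime_comm.mp ((Nat.Prime.coprime_iff_not_dvd hp).mpr hpm)
      have hmdvd : m ∣ k - k' := by
        have h := Nat.dvd_sub hmk hk'm
        rwa [show (k - 1) - (k' - 1) = k - k' by omega] at h
      have hmp : m * p ∣ k - k' := hco.mul_dvd_of_dvd_of_dvd hmdvd (Nat.dvd_sub hpk hk'p)
      obtain ⟨c, hc⟩ := hmp
      have hmp0 : 0 < m * p := Nat.mul_pos (by omega) hp.pos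
      have hEk : eAux k' m p k = c + 1 := by
        rw [eAux, if_neg (by omega), hc, Nat.mul_div_cancel_left c hmp0]
      have hEj : ∀ j : ℕ, j < k → eAux k' m p j ≤ c := by
        intro j hj
        rw [eAux]
        split_ifs with h1
        · exact Nat.zero_le c
        · have hlt : j - k' < c * (m * p) := by
            calc j - k' < k - k' := by omega
            _ = c * (m * p) := by rw [hc]; ring
          have := (Nat.div_lt_iff_lt_mul hmp0).mpr hlt
          omega
      have hsum : ‖∑ j ∈ Finset.range k, b j * PowerSeries.coeff (R := K) k (F ^ j)‖
          ≤ a ^ (k - 1) / D ^ c := by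
        apply IsUltrametricDist.norm_sum_le_of_forall_le_of_nonneg
          (div_nonneg (pow_nonneg ha0 _) (pow_nonneg (le_of_lt hD0) _))
        intro j hj
        rw [Finset.mem_range] at hj
        refine le_trans (hterm j hj) ?_
        apply div_le_div_of_nonneg_left (pow_nonneg ha0 _) (pow_pos hD0 _)
        exact pow_le_pow_of_le_one (le_of_lt hD0) hD1 (hEj j hj)
      have hpk1 : ¬ p ∣ (k - 1) := by
        intro h
        have h2 := Nat.dvd_sub hpk h
        rw [show k - (k - 1) = 1 by omega] at h2
        exact absurd (Nat.le_of_dvd one_pos h2) (by have := hp.two_le; omega)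
      have hden : ‖lam - lam ^ k‖ = D := by
        rw [hfac k hk2, norm_mul, hlam, one_mul]
        exact hveq (k - 1) (by omega) hmk hpk1
      rw [hden] at hnorm
      have hbk : ‖b k‖ = ‖∑ j ∈ Finset.range k, b j * PowerSeries.coeff (R := K) k (F ^ j)‖ / D :=
        (eq_div_iff (ne_of_gt hD0)).mpr (by linarith [hnorm, mul_comm D ‖b k‖])
      rw [hbk, hEk]
      calc ‖∑ j ∈ Finset.range k, b j * PowerSeries.coeff (R := K) k (F ^ j)‖ / D
          ≤ (a ^ (k - 1) / D ^ c) / D := by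
            gcongr
      _ = a ^ (k - 1) / D ^ (c + 1) := by rw [div_div, ← pow_succ]
    · -- no small divisor
      have hge1 : 1 ≤ ‖lam - lam ^ k‖ := by
        rw [hfac k hk2, norm_mul, hlam, one_mul]
        by_contra h
        push_neg at h
        exact hmk (hvlt1 (k - 1) (by omega) h)
      have hsum : ‖∑ j ∈ Finset.range k, b j * PowerSeries.coeff (R := K) k (F ^ j)‖
          ≤ a ^ (k - 1) / D ^ eAux k' m p k := by
        apply IsUltrametricDist.norm_sum_le_of_forall_le_of_nonneg hRHS0
        intro j hj
        rw [Finset.mem_range] at hj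
        refine le_trans (hterm j hj) ?_
        apply div_le_div_of_nonneg_left (pow_nonneg ha0 _) (pow_pos hD0 _)
        exact pow_le_pow_of_le_one (le_of_lt hD0) hD1 (eAux_mono k' m p (le_of_lt hj))
      calc ‖b k‖ ≤ ‖lam - lam ^ k‖ * ‖b k‖ := by
            nlinarith [norm_nonneg (b k)]
      _ = ‖∑ j ∈ Finset.range k, b j * PowerSeries.coeff (R := K) k (F ^ j)‖ := hnorm
      _ ≤ a ^ (k - 1) / D ^ eAux k' m p k := hsum
  · -- p does not divide k : b k = 0
    have hsum0 : ∑ j ∈ Finset.range k, b j * PowerSeries.coeff (R := K) k (F ^ j) = 0 := by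
      apply Finset.sum_eq_zero
      intro j hj
      rw [Finset.mem_range] at hj
      match j, hj with
      | 0, _ => rw [hb0, zero_mul]
      | 1, _ =>
        rw [hb1, one_mul, pow_one]
        by_contra hne'
        exact hpk (hFdvd k hk2 hne')
      | (j+2), hj =>
        by_cases hdj : p ∣ (j + 2)
        · have : PowerSeries.coeff (R := K) k (F ^ (j+2)) = 0 := by
            by_contra hne'
            exact hpk (pow_coeff_dvd p hp F (j+2) k hdj hne')
          rw [this, mul_zero]
        · rw [(IH (j+2) hj).1 hdj (by omega), zero_mul]
    have hbk : b k = 0 := by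
      have h0 := hrk
      rw [hsum0] at h0
      exact (mul_eq_zero.mp h0).resolve_left (hne k hk2)
    exact ⟨fun _ _ => hbk, fun _ => by rw [hbk, norm_zero]; exact hRHS0⟩
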